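/- Let r, c, m > 0 and 0 < a < 1 with c > 1/(r·(1−a)) (strong cooperation). Then there exists p_SN ∈ (0, 1) such that: (a) for every p with p_SN < p < 1 the system has exactly two interior equilibria; (b) for p = p_SN the system has exactly one interior equilibrium; and (c) for 0 < p < p_SN the system has no interior equilibrium. -/

import Mathlib

open Real Set Filter

noncomputable def Hc (r c a u : ℝ) : ℝ := c*r*u^2*((1-u)*(u-a))
noncomputable def phiF (r c a u : ℝ) : ℝ := (u + Real.sqrt (u^2 + 4*Hc r c a u))/2
noncomputable def Pq (r c a T u : ℝ) : ℝ := T^2 - T*u - Hc r c a u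
noncomputable def Dq (r c a T z : ℝ) : ℝ := z^4 - z^3 + (c*r*a)*z^2 - (c*r*(1+a)*T)*z + c*r*T^2

lemma Hc_nonneg {r c a u : ℝ} (hr : 0 < r) (hc : 0 < c) (hu : a ≤ u) (hu1 : u ≤ 1) :
    0 ≤ Hc r c a u := by
  unfold Hc
  have h1 : (0:ℝ) ≤ (1-u)*(u-a) := mul_nonneg (by linarith) (by linarith)
  positivity

lemma Pq_factor {r c a u : ℝ} (hr : 0 < r) (hc : 0 < c) (hu : a ≤ u) (hu1 : u ≤ 1) (T : ℝ) :
    Pq r c a T u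
      = (T - phiF r c a u) * (T - (u - Real.sqrt (u^2 + 4*Hc r c a u))/2) := by
  have h0 : 0 ≤ u^2 + 4*Hc r c a u := by nlinarith [Hc_nonneg hr hc hu hu1, sq_nonneg u]
  have hS2 := Real.sq_sqrt h0
  unfold Pq phiF
  linear_combination ((1:ℝ)/4) * hS2

lemma sqrt_ge {r c a u : ℝ} (hr : 0 < r) (hc : 0 < c) (ha0 : 0 < a) (hu : a ≤ u) (hu1 : u ≤ 1) :
    u ≤ Real.sqrt (u^2 + 4*Hc r c a u) := by
  have h0 : 0 ≤ Hc r c a u := Hc_nonneg hr hc hu hu1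
  calc u = Real.sqrt (u^2) := by rw [Real.sqrt_sq (by linarith)]
    _ ≤ _ := Real.sqrt_le_sqrt (by linarith)

lemma Pq_eq_iff {r c a u T : ℝ} (hr : 0 < r) (hc : 0 < c) (ha0 : 0 < a)
    (hu : a ≤ u) (hu1 : u ≤ 1) (hT : 0 < T) :
    Pq r c a T u = 0 ↔ T = phiF r c a u := by
  have hpos : 0 < T - (u - Real.sqrt (u^2 + 4*Hc r c a u))/2 := by
    have := sqrt_ge hr hc ha0 hu hu1; linarith
  rw [Pq_factor hr hc hu hu1, mul_eq_zero]
  constructor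
  · rintro (h | h)
    · linarith
    · linarith [hpos]
  · intro h; left; linarith

lemma Pq_neg_iff {r c a u T : ℝ} (hr : 0 < r) (hc : 0 < c) (ha0 : 0 < a)
    (hu : a ≤ u) (hu1 : u ≤ 1) (hT : 0 < T) :
    Pq r c a T u < 0 ↔ T < phiF r c a u := by
  have hpos : 0 < T - (u - Real.sqrt (u^2 + 4*Hc r c a u))/2 := by
    have := sqrt_ge hr hc ha0 hu hu1; linarith
  rw [Pq_factor hr hc hu hu1]
  constructor
  · intro h
    by_contra hcon
    push_neg at hcon
    nlinarith
  · intro h; nlinarith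

lemma Dq_Pq {r c a T u : ℝ} (hu : u ≠ 0) :
    Dq r c a T (T/u) = T^2/u^4 * Pq r c a T u := by
  unfold Dq Pq Hc
  field_simp
  ring

lemma Dq_strictConvex {r c a : ℝ} (hr : 0 < r) (hc : 0 < c) (ha0 : 0 < a) (T : ℝ) :
    StrictConvexOn ℝ (Ici (1:ℝ)) (Dq r c a T) := by
  have hd1 : deriv (Dq r c a T) = fun z => 4*z^3 - 3*z^2 + (c*r*a)*(2*z) - c*r*(1+a)*T := by
    funext z
    have h1 := ((((hasDerivAt_pow 4 z).sub (hasDerivAt_pow 3 z)).add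
      ((hasDerivAt_pow 2 z).const_mul (c*r*a))).sub
      ((hasDerivAt_id' z).const_mul (c*r*(1+a)*T))).add_const (c*r*T^2)
    have h2 : HasDerivAt (Dq r c a T)
        (4*z^3 - 3*z^2 + (c*r*a)*(2*z) - c*r*(1+a)*T) z := by
      unfold Dq
      refine h1.congr_deriv ?_
      push_cast; ring
    exact h2.deriv
  have hd2 : deriv (fun z : ℝ => 4*z^3 - 3*z^2 + (c*r*a)*(2*z) - c*r*(1+a)*T)
      = fun z => 12*z^2 - 6*z + 2*(c*r*a) := by
    funext z
    have h1 := ((((hasDerivAt_pow 3 z).const_mul (4:ℝ)).sub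
      ((hasDerivAt_pow 2 z).const_mul (3:ℝ))).add
      (((hasDerivAt_id' z).const_mul (2:ℝ)).const_mul (c*r*a))).sub_const (c*r*(1+a)*T)
    have h2 : HasDerivAt (fun z : ℝ => 4*z^3 - 3*z^2 + (c*r*a)*(2*z) - c*r*(1+a)*T)
        (12*z^2 - 6*z + 2*(c*r*a)) z := by
      refine h1.congr_deriv ?_
      push_cast; ring
    exact h2.deriv
  apply strictConvexOn_of_deriv2_pos (convex_Ici 1)
  · apply Continuous.continuousOn; unfold Dq; fun_prop
  · intro x hx
    rw [interior_Ici, mem_Ioi] at hx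
    have h3 : deriv^[2] (Dq r c a T) x = 12*x^2 - 6*x + 2*(c*r*a) := by
      show deriv (deriv (Dq r c a T)) x = _
      rw [hd1, hd2]
    rw [h3]
    nlinarith [mul_pos (mul_pos hc hr) ha0]

lemma phiF_gt_self {r c a u : ℝ} (hr : 0 < r) (hc : 0 < c) (ha0 : 0 < a)
    (hu : a < u) (hu1 : u < 1) : u < phiF r c a u := by
  have hu0 : 0 < u := ha0.trans hu
  have hH : 0 < Hc r c a u := by
    unfold Hc
    have h1 : (0:ℝ) < (1-u)*(u-a) := mul_pos (by linarith) (by linarith)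
    exact mul_pos (mul_pos (mul_pos hc hr) (pow_pos hu0 2)) h1
  have h0 : 0 ≤ u^2 + 4*Hc r c a u := by nlinarith [sq_nonneg u]
  have hS2 := Real.sq_sqrt h0
  have hS0 : 0 ≤ Real.sqrt (u^2 + 4*Hc r c a u) := Real.sqrt_nonneg _
  have hSu : u < Real.sqrt (u^2 + 4*Hc r c a u) := by
    nlinarith
  unfold phiF; linarith



/-- Interior equilibrium predicate for the predator-prey system with cooperative
hunting and Allee effect. -/
def IsInteriorEquilibrium (r c a p u v : ℝ) : Prop :=
  0 < u ∧ 0 < v ∧ r * (1 - u) * (u - a) = (1 + c * v) * v ∧ p * u * (1 + c * v) = 1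



lemma char {r c a p u v : ℝ} (hr : 0 < r) (hc : 0 < c) (ha0 : 0 < a) (ha1 : a < 1)
    (hp : 0 < p) :
    IsInteriorEquilibrium r c a p u v ↔
      (a < u ∧ u < 1 ∧ phiF r c a u = 1/p ∧ v = (1/(p*u) - 1)/c) := by
  constructor
  · rintro ⟨hu, hv, he1, he2⟩
    have hcv : 0 < 1 + c*v := by nlinarith
    have hprod : 0 < (1-u)*(u-a) := by nlinarith
    have hau : a < u := by nlinarith
    have hu1 : u < 1 := by nlinarith
    have hcv2 : 1/(p*u) = 1 + c*v := by
      field_simp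
      linear_combination -he2
    have hvf : v = (1/(p*u) - 1)/c := by
      rw [hcv2]; field_simp; ring
    have hT : 1/p = u*(1+c*v) := by
      field_simp
      linear_combination -he2
    have hPq : Pq r c a (1/p) u = 0 := by
      unfold Pq Hc
      rw [hT]
      linear_combination (-(c*u^2))*he1
    have := (Pq_eq_iff hr hc ha0 hau.le hu1.le (by positivity)).mp hPq
    exact ⟨hau, hu1, this.symm, hvf⟩
  · rintro ⟨hau, hu1, hphi, hveq⟩
    have hu : 0 < u := lt_trans ha0 hau
    have hPq : Pq r c a (1/p) u = 0 :=
      (Pq_eq_iff hr hc ha0 hau.le hu1.le (by positivity)).mpr hphi.symm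
    have hTu : u < 1/p := hphi ▸ phiF_gt_self hr hc ha0 hau hu1
    have hpp : p*(1/p) = 1 := by field_simp
    have hpu : 1 < 1/(p*u) := by
      rw [lt_div_iff₀ (by positivity)]
      nlinarith [mul_lt_mul_of_pos_left hTu hp]
    have hv : 0 < v := by rw [hveq]; exact div_pos (by linarith) hc
    have hcv : 1 + c*v = 1/(p*u) := by
      rw [hveq]; field_simp; ring
    have hq : p*u*(1+c*v) = 1 := by rw [hcv]; field_simp
    refine ⟨hu, hv, ?_, hq⟩
    have hPqp : p - p^2*u = c*r*u^2*((1-u)*(u-a))*p^3 := by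
      unfold Pq Hc at hPq
      field_simp at hPq
      linear_combination p * hPq
    have e1 : 1 - p*u = c*r*u^2*((1-u)*(u-a))*p^2 :=
      mul_left_cancel₀ hp.ne' (by linear_combination hPqp)
    have key : (c*u^2*p^2) * (r*(1-u)*(u-a)) = (c*u^2*p^2) * ((1+c*v)*v) := by
      linear_combination (-1 : ℝ)*e1 + (u*p - p*u*(1+c*v) - 1)*hq
    exact mul_left_cancel₀ (by positivity) key

lemma three_zeros {r c a T x y z : ℝ} (hr : 0 < r) (hc : 0 < c) (ha0 : 0 < a)
    (hT : 1 ≤ T)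
    (hx : 0 < x) (hz1 : z < 1)
    (hxy : x < y) (hyz : y < z)
    (hPx : Pq r c a T x = 0) (hPy : Pq r c a T y = 0) (hPz : Pq r c a T z = 0) :
    False := by
  have hT0 : 0 < T := lt_of_lt_of_le one_pos hT
  have hy : 0 < y := hx.trans hxy
  have hz : 0 < z := hy.trans hyz
  set A := T/z with hA
  set B := T/y with hB
  set C := T/x with hC
  have hAB : A < B := by
    apply div_lt_div_of_pos_left hT0 hy hyz
  have hBC : B < C := by
    apply div_lt_div_of_pos_left hT0 hx hxy
  have hA1 : 1 ≤ A := by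
    rw [le_div_iff₀ hz]; nlinarith
  have hDA : Dq r c a T A = 0 := by rw [hA, Dq_Pq hz.ne', hPz, mul_zero]
  have hDB : Dq r c a T B = 0 := by rw [hB, Dq_Pq hy.ne', hPy, mul_zero]
  have hDC : Dq r c a T C = 0 := by rw [hC, Dq_Pq hx.ne', hPx, mul_zero]
  have hconv := Dq_strictConvex hr hc ha0 (T := T)
  have hl : (0:ℝ) < (C - B)/(C - A) := by
    apply div_pos <;> linarith
  have hm : (0:ℝ) < (B - A)/(C - A) := by
    apply div_pos <;> linarith
  have hCA : C - A ≠ 0 := by linarith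
  have hsum : (C - B)/(C - A) + (B - A)/(C - A) = 1 := by
    have h9 : C - B + (B - A) = C - A := by ring
    rw [← add_div, h9]
    exact div_self hCA
  have hcomb : ((C - B)/(C - A)) • A + ((B - A)/(C - A)) • C = B := by
    simp only [smul_eq_mul]
    field_simp
    ring
  have := hconv.2 (mem_Ici.mpr hA1) (mem_Ici.mpr (by linarith : (1:ℝ) ≤ C))
    (by linarith : A ≠ C) hl hm hsum
  rw [hcomb, hDA, hDB, hDC] at this
  simp at this

lemma two_zeros_aux {r c a M x y : ℝ} (hr : 0 < r) (hc : 0 < c) (ha0 : 0 < a)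
    (hM : 1 < M)
    (hmax : ∀ w : ℝ, a ≤ w → w ≤ 1 → phiF r c a w ≤ M)
    (hax : a < x) (hy1 : y < 1) (hxy : x < y)
    (hPx : Pq r c a M x = 0) (hPy : Pq r c a M y = 0) : False := by
  have hM0 : 0 < M := by linarith
  have hx0 : 0 < x := ha0.trans hax
  have hy0 : 0 < y := hx0.trans hxy
  have hx1 : x < 1 := hxy.trans hy1
  have hay : a < y := hax.trans hxy
  have hzy1 : 1 < M/y := by rw [lt_div_iff₀ hy0]; linarith
  have hzyx : M/y < M/x := div_lt_div_of_pos_left hM0 hx0 hxy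
  have hDx : Dq r c a M (M/x) = 0 := by rw [Dq_Pq hx0.ne', hPx, mul_zero]
  have hDy : Dq r c a M (M/y) = 0 := by rw [Dq_Pq hy0.ne', hPy, mul_zero]
  obtain ⟨z0, hz0⟩ : ∃ z0 : ℝ, z0 = (1/2 : ℝ) * (M/y) + (1/2 : ℝ) * (M/x) := ⟨_, rfl⟩
  have hz0y : M/y < z0 := by rw [hz0]; linarith
  have hz0x : z0 < M/x := by rw [hz0]; linarith
  have hz00 : 0 < z0 := by linarith
  have hD0 : Dq r c a M z0 < 0 := by
    have h := (Dq_strictConvex hr hc ha0 (T := M)).2 (mem_Ici.mpr hzy1.le)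
      (mem_Ici.mpr (by linarith : (1:ℝ) ≤ M/x)) (by linarith : M/y ≠ M/x)
      (by norm_num : (0:ℝ) < 1/2) (by norm_num : (0:ℝ) < 1/2) (by norm_num)
    rw [hDx, hDy] at h
    rw [hz0]
    simpa [smul_eq_mul] using h
  obtain ⟨u0, hu0def⟩ : ∃ u0 : ℝ, u0 = M/z0 := ⟨_, rfl⟩
  have hu0pos : 0 < u0 := by rw [hu0def]; positivity
  have hz0u0 : M/u0 = z0 := by rw [hu0def]; field_simp
  have hPu0 : Pq r c a M u0 < 0 := by
    have h1 : Dq r c a M (M/u0) = M^2/u0^4 * Pq r c a M u0 := Dq_Pq hu0pos.ne'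
    rw [hz0u0] at h1
    nlinarith [pow_pos hu0pos 4, pow_pos hM0 2,
      div_pos (pow_pos hM0 2) (pow_pos hu0pos 4)]
  have hxu0 : x < u0 := by
    rw [hu0def, lt_div_iff₀ hz00]
    calc x * z0 < x * (M/x) := mul_lt_mul_of_pos_left hz0x hx0
      _ = M := by field_simp
  have hu0y : u0 < y := by
    rw [hu0def, div_lt_iff₀ hz00]
    calc M = y * (M/y) := by field_simp
      _ < y * z0 := mul_lt_mul_of_pos_left hz0y hy0
  have hMlt : M < phiF r c a u0 :=
    (Pq_neg_iff hr hc ha0 (by linarith) (by linarith) hM0).mp hPu0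
  have := hmax u0 (by linarith) (by linarith)
  linarith


/-- Under strong cooperation there is a saddle-node value `p_SN ∈ (0,1)`:
exactly two interior equilibria for `p_SN < p < 1`, exactly one at `p = p_SN`,
and none for `0 < p < p_SN`. -/
theorem stmt_12 (r c m a : ℝ) (hr : 0 < r) (hc : 0 < c) (hm : 0 < m)
    (ha0 : 0 < a) (ha1 : a < 1) (hstrong : 1 / (r * (1 - a)) < c) :
    ∃ pSN : ℝ, 0 < pSN ∧ pSN < 1 ∧
      (∀ p : ℝ, pSN < p → p < 1 →
        ∃ u₁ v₁ u₂ v₂ : ℝ, (u₁, v₁) ≠ (u₂, v₂) ∧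
          IsInteriorEquilibrium r c a p u₁ v₁ ∧
          IsInteriorEquilibrium r c a p u₂ v₂ ∧
          ∀ u v : ℝ, IsInteriorEquilibrium r c a p u v →
            (u, v) = (u₁, v₁) ∨ (u, v) = (u₂, v₂)) ∧
      (∃! uv : ℝ × ℝ, IsInteriorEquilibrium r c a pSN uv.1 uv.2) ∧
      (∀ p : ℝ, 0 < p → p < pSN → ¬ ∃ u v : ℝ, IsInteriorEquilibrium r c a p u v) := by
  have hcont : Continuous (phiF r c a) := by unfold phiF Hc; fun_prop
  obtain ⟨ustar, hustar_mem, hmax⟩ :=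
    (isCompact_Icc (a := a) (b := 1)).exists_isMaxOn ⟨a, le_refl a, ha1.le⟩
      hcont.continuousOn
  obtain ⟨M, hMdef⟩ : ∃ M : ℝ, M = phiF r c a ustar := ⟨_, rfl⟩
  -- find u0 near 1 with phiF > 1
  have hra : 0 < r*(1-a) := mul_pos hr (by linarith)
  have hsc : 1 < c*(r*(1-a)) := (div_lt_iff₀ hra).mp hstrong
  have hgcont : Continuous (fun u : ℝ => c*r*u^2*(u-a)) := by fun_prop
  have hopen : IsOpen {u : ℝ | 1 < c*r*u^2*(u-a)} := isOpen_lt continuous_const hgcont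
  have h1mem : (1:ℝ) ∈ {u : ℝ | 1 < c*r*u^2*(u-a)} := by
    simp only [mem_setOf_eq]; nlinarith
  have hopen2 : IsOpen {u : ℝ | a < u} := isOpen_lt continuous_const continuous_id
  haveI := nhdsLT_neBot (1:ℝ)
  have hev : ∀ᶠ u in nhdsWithin 1 (Iio 1), (1 < c*r*u^2*(u-a) ∧ a < u) := by
    apply eventually_nhdsWithin_of_eventually_nhds
    exact Filter.Eventually.and
      (hopen.mem_nhds h1mem : ∀ᶠ u in nhds 1, 1 < c*r*u^2*(u-a))
      (hopen2.mem_nhds ha1 : ∀ᶠ u in nhds 1, a < u)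
  obtain ⟨u0, ⟨hg0, hau0⟩, hu01⟩ := (hev.and eventually_mem_nhdsWithin).exists
  rw [mem_Iio] at hu01
  have hu00 : 0 < u0 := ha0.trans hau0
  have hH0 : (1 - u0) < Hc r c a u0 := by
    unfold Hc
    nlinarith [mul_lt_mul_of_pos_left hg0 (show (0:ℝ) < 1-u0 by linarith)]
  have h00 : 0 ≤ u0^2 + 4*Hc r c a u0 := by nlinarith [sq_nonneg u0]
  have hS2 := Real.sq_sqrt h00
  have hS0 : 0 ≤ Real.sqrt (u0^2 + 4*Hc r c a u0) := Real.sqrt_nonneg _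
  have hSgt : 2 - u0 < Real.sqrt (u0^2 + 4*Hc r c a u0) := by nlinarith
  have hphi0 : 1 < phiF r c a u0 := by unfold phiF; linarith
  have hM : 1 < M := by rw [hMdef]; exact lt_of_lt_of_le hphi0 (hmax ⟨hau0.le, hu01.le⟩)
  have hM0 : 0 < M := by linarith
  -- phiF at endpoints
  have hHa : Hc r c a a = 0 := by unfold Hc; rw [sub_self, mul_zero, mul_zero]
  have hphia : phiF r c a a = a := by
    unfold phiF
    rw [hHa, mul_zero, add_zero, Real.sqrt_sq ha0.le]
    ring
  have hH1 : Hc r c a 1 = 0 := by unfold Hc; rw [sub_self, zero_mul, mul_zero]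
  have hphi1 : phiF r c a 1 = 1 := by
    unfold phiF
    rw [hH1, mul_zero, add_zero, one_pow, Real.sqrt_one]
    norm_num
  have hua : a < ustar := by
    rcases hustar_mem.1.lt_or_eq with h | h
    · exact h
    · exfalso; rw [hMdef, ← h, hphia] at hM; linarith
  have hu1s : ustar < 1 := by
    rcases hustar_mem.2.lt_or_eq with h | h
    · exact h
    · exfalso; rw [hMdef, h, hphi1] at hM; linarith
  have hPcont : ∀ T : ℝ, Continuous (Pq r c a T) := by
    intro T; unfold Pq Hc; fun_prop
  have hMeq : (1:ℝ)/(1/M) = M := one_div_one_div M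
  refine ⟨1/M, by positivity, (div_lt_one hM0).mpr hM, ?_, ?_, ?_⟩
  · -- (a) two equilibria for 1/M < p < 1
    intro p hp1 hp2
    have hp0 : 0 < p := lt_trans (by positivity) hp1
    have hT1 : 1 < 1/p := by rw [lt_div_iff₀ hp0]; linarith
    have h1pM : 1 < p*M := by
      have := (div_lt_iff₀ hM0).mp hp1; linarith
    have hTM : 1/p < M := by rw [div_lt_iff₀ hp0]; linarith
    have hPa : 0 < Pq r c a (1/p) a := by
      have h : Pq r c a (1/p) a = (1/p)*((1/p)-a) := by unfold Pq Hc; ring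
      rw [h]
      have : (0:ℝ) < 1/p := by positivity
      nlinarith
    have hP1 : 0 < Pq r c a (1/p) 1 := by
      have h : Pq r c a (1/p) 1 = (1/p)*((1/p)-1) := by unfold Pq Hc; ring
      rw [h]
      have : (0:ℝ) < 1/p := by positivity
      nlinarith
    have hPs : Pq r c a (1/p) ustar < 0 :=
      (Pq_neg_iff hr hc ha0 hua.le hu1s.le (by positivity)).mpr (by rw [← hMdef]; exact hTM)
    obtain ⟨u₁, hu₁mem, hu₁P⟩ := intermediate_value_Ioo' hua.le
      (hPcont (1/p)).continuousOn (show (0:ℝ) ∈ Ioo _ _ from ⟨hPs, hPa⟩)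
    obtain ⟨u₂, hu₂mem, hu₂P⟩ := intermediate_value_Ioo hu1s.le
      (hPcont (1/p)).continuousOn (show (0:ℝ) ∈ Ioo _ _ from ⟨hPs, hP1⟩)
    have hu₁a : a < u₁ := hu₁mem.1
    have hu₁1 : u₁ < 1 := hu₁mem.2.trans hu1s
    have hu₂a : a < u₂ := hua.trans hu₂mem.1
    have hu₂1 : u₂ < 1 := hu₂mem.2
    have hu₁u₂ : u₁ < u₂ := hu₁mem.2.trans hu₂mem.1
    have hphi₁ : phiF r c a u₁ = 1/p :=
      ((Pq_eq_iff hr hc ha0 hu₁a.le hu₁1.le (by positivity)).mp hu₁P).symm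
    have hphi₂ : phiF r c a u₂ = 1/p :=
      ((Pq_eq_iff hr hc ha0 hu₂a.le hu₂1.le (by positivity)).mp hu₂P).symm
    refine ⟨u₁, (1/(p*u₁) - 1)/c, u₂, (1/(p*u₂) - 1)/c, ?_, ?_, ?_, ?_⟩
    · intro h
      have := (Prod.mk.injEq _ _ _ _).mp h
      exact absurd this.1 (ne_of_lt hu₁u₂)
    · exact (char hr hc ha0 ha1 hp0).mpr ⟨hu₁a, hu₁1, hphi₁, rfl⟩
    · exact (char hr hc ha0 ha1 hp0).mpr ⟨hu₂a, hu₂1, hphi₂, rfl⟩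
    · intro u v heq
      obtain ⟨hau, hu1, hphi, hveq⟩ := (char hr hc ha0 ha1 hp0).mp heq
      have hP : Pq r c a (1/p) u = 0 :=
        (Pq_eq_iff hr hc ha0 hau.le hu1.le (by positivity)).mpr hphi.symm
      have hu' : u = u₁ ∨ u = u₂ := by
        by_contra hcon
        push_neg at hcon
        obtain ⟨hne1, hne2⟩ := hcon
        rcases lt_trichotomy u u₁ with h | h | h
        · exact three_zeros hr hc ha0 hT1.le (ha0.trans hau) hu₂1 h hu₁u₂ hP hu₁P hu₂P
        · exact hne1 h
        · rcases lt_trichotomy u u₂ with h' | h' | h'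
          · exact three_zeros hr hc ha0 hT1.le (ha0.trans hu₁a) hu₂1 h h' hu₁P hP hu₂P
          · exact hne2 h'
          · exact three_zeros hr hc ha0 hT1.le (ha0.trans hu₁a) hu1 hu₁u₂ h' hu₁P hu₂P hP
      rcases hu' with h | h
      · left; subst h; rw [hveq]
      · right; subst h; rw [hveq]
  · -- (b) exactly one at p = 1/M
    have hpSN0 : (0:ℝ) < 1/M := by positivity
    have hstareq : IsInteriorEquilibrium r c a (1/M) ustar ((1/((1/M)*ustar) - 1)/c) :=
      (char hr hc ha0 ha1 hpSN0).mpr ⟨hua, hu1s, by rw [hMeq]; exact hMdef.symm, rfl⟩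
    refine ⟨(ustar, (1/((1/M)*ustar) - 1)/c), hstareq, ?_⟩
    rintro ⟨u, v⟩ heq
    obtain ⟨hau, hu1, hphi, hveq⟩ := (char hr hc ha0 ha1 hpSN0).mp heq
    dsimp only at hau hu1 hphi hveq
    rw [hMeq] at hphi
    have hueq : u = ustar := by
      have hmax' : ∀ w : ℝ, a ≤ w → w ≤ 1 → phiF r c a w ≤ M := fun w h1 h2 => by
        rw [hMdef]; exact hmax ⟨h1, h2⟩
      have hPu : Pq r c a M u = 0 :=
        (Pq_eq_iff hr hc ha0 hau.le hu1.le hM0).mpr hphi.symm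
      have hPs : Pq r c a M ustar = 0 :=
        (Pq_eq_iff hr hc ha0 hua.le hu1s.le hM0).mpr hMdef
      rcases lt_trichotomy u ustar with h | h | h
      · exact (two_zeros_aux hr hc ha0 hM hmax' hau hu1s h hPu hPs).elim
      · exact h
      · exact (two_zeros_aux hr hc ha0 hM hmax' hua hu1 h hPs hPu).elim
    have hveq' : v = (1/((1/M)*ustar) - 1)/c := by rw [hveq, hueq]
    exact Prod.ext hueq hveq'
  · -- (c) no equilibria for 0 < p < 1/M
    intro p hp0 hpM h
    obtain ⟨u, v, heq⟩ := h
    obtain ⟨hau, hu1, hphi, hveq⟩ := (char hr hc ha0 ha1 hp0).mp heq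
    have hp' : p*M < 1 := (lt_div_iff₀ hM0).mp hpM
    have h1 : M < 1/p := by
      rw [lt_div_iff₀ hp0]
      linarith [mul_comm p M]
    have h2 : phiF r c a u ≤ M := by rw [hMdef]; exact hmax ⟨hau.le, hu1.le⟩
    rw [hphi] at h2
    linarith
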